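/- Let F_q be a finite field, G an invertible n×n matrix over F_q, and for each 0 ≤ i < n let G^{(i)} ∈ F_q^{K_i × N} be a matrix of rank K_i, and for each pair 0 ≤ s < i < n let M^{(s,i)} ∈ F_q^{K_s × N} be an arbitrary matrix. Consider the linear map sending a tuple (u^{(0)}, …, u^{(n−1)}) ∈ F_q^{K_0} × ⋯ × F_q^{K_{n−1}} to the n×N matrix GᵀB, where B is the n×N matrix whose i-th row equals u^{(i)}G^{(i)} + Σ_{s=0}^{i−1} u^{(s)}M^{(s,i)}. Then this map is injective; consequently, the interlinked generalized concatenated code (its image) is a linear code of length nN and dimension Σ_{i=0}^{n−1} K_i. -/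

import Mathlib

open Matrix

/-- The interlinked generalized concatenated code construction. `G` is an
invertible `n×n` matrix, each outer generator matrix `G' i` is a `K i × N` matrix of rank
`K i`, and `M s i` are arbitrary interlinking matrices. The map sending
`(u^{(0)}, …, u^{(n−1)})` to `Gᵀ·B`, where the `i`-th row of `B` is
`u^{(i)}·G' i + ∑_{s<i} u^{(s)}·M s i`, is injective; consequently its image is a linear
code of length `nN` and dimension `∑ K i`. -/
theorem igcc_injective_and_dim {F : Type*} [Field F] [Fintype F] {n N : ℕ}
    (G : Matrix (Fin n) (Fin n) F) (hG : IsUnit G)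
    (K : Fin n → ℕ)
    (G' : (i : Fin n) → Matrix (Fin (K i)) (Fin N) F)
    (hG' : ∀ i, (G' i).rank = K i)
    (M : (s i : Fin n) → Matrix (Fin (K s)) (Fin N) F) :
    let f : ((i : Fin n) → (Fin (K i) → F)) → Matrix (Fin n) (Fin N) F :=
      fun u => Gᵀ * Matrix.of fun i =>
        Matrix.vecMul (u i) (G' i) +
          ∑ s ∈ Finset.univ.filter (fun s => s < i), Matrix.vecMul (u s) (M s i);
    Function.Injective f ∧
      ∃ 𝒞 : Submodule F (Matrix (Fin n) (Fin N) F),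
        (𝒞 : Set (Matrix (Fin n) (Fin N) F)) = Set.range f ∧
          Module.finrank F 𝒞 = ∑ i, K i := by
  intro f
  -- the map as a linear map
  let L : ((i : Fin n) → (Fin (K i) → F)) →ₗ[F] Matrix (Fin n) (Fin N) F :=
    { toFun := f
      map_add' := by
        intro u v
        show f (u + v) = f u + f v
        simp only [f]
        rw [← Matrix.mul_add]
        congr 1
        ext i j
        simp [Matrix.add_vecMul, Finset.sum_add_distrib, Pi.add_apply]
        ring
      map_smul' := by
        intro c u
        show f (c • u) = c • f u
        simp only [f, RingHom.id_apply]
        rw [← Matrix.mul_smul]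
        congr 1
        ext i j
        simp [Matrix.smul_vecMul]
        rw [mul_add, Finset.mul_sum] }
  have hLf : ∀ u, L u = f u := fun _ => rfl
  -- rows of each G' i are linearly independent, so vecMul is injective
  have hvm : ∀ i, Function.Injective (fun v => Matrix.vecMul v (G' i)) := by
    intro i
    have hli : LinearIndependent F (fun j => (G' i) j) := by
      rw [linearIndependent_iff_card_eq_finrank_span]
      have h1 := (G' i).rank_eq_finrank_span_row
      rw [hG' i] at h1
      rw [Fintype.card_fin, Set.finrank]
      exact h1
    exact Matrix.vecMul_injective_iff.mpr hli
  -- transpose of G is invertible, so left multiplication is injective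
  have : Invertible G := hG.invertible
  have : Invertible Gᵀ := Matrix.invertibleTranspose G
  have hGinj : Function.Injective (fun B : Matrix (Fin n) (Fin N) F => Gᵀ * B) :=
    Matrix.mul_right_injective_of_invertible Gᵀ
  -- key: kernel is trivial
  have hker : ∀ u, f u = 0 → u = 0 := by
    intro u hu
    have hB : (Matrix.of fun i =>
        Matrix.vecMul (u i) (G' i) +
          ∑ s ∈ Finset.univ.filter (fun s => s < i), Matrix.vecMul (u s) (M s i))
        = (0 : Matrix (Fin n) (Fin N) F) := by
      apply hGinj
      simpa [f] using hu
    have key : ∀ m : ℕ, ∀ i : Fin n, i.val = m → u i = 0 := by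
      intro m
      induction m using Nat.strong_induction_on with
      | _ m ih =>
        intro i him
        have hrow : Matrix.vecMul (u i) (G' i) +
            ∑ s ∈ Finset.univ.filter (fun s => s < i), Matrix.vecMul (u s) (M s i) = 0 := by
          have := congrFun hB i
          exact this
        have hsum : ∑ s ∈ Finset.univ.filter (fun s => s < i),
            Matrix.vecMul (u s) (M s i) = 0 := by
          apply Finset.sum_eq_zero
          intro s hs
          have hslt : s < i := (Finset.mem_filter.mp hs).2
          have : u s = 0 := ih s.val (by omega) s rfl
          simp [this]
        rw [hsum, add_zero] at hrow
        have := hvm i (a₁ := u i) (a₂ := 0) (by simpa using hrow)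
        exact this
    funext i
    exact key i.val i rfl
  have hLker : LinearMap.ker L = ⊥ := by
    rw [LinearMap.ker_eq_bot']
    intro u hu
    exact hker u hu
  have hLinj : Function.Injective L := LinearMap.ker_eq_bot.mp hLker
  have hfinj : Function.Injective f := hLinj
  refine ⟨hfinj, LinearMap.range L, ?_, ?_⟩
  · ext x
    simp [LinearMap.mem_range, Set.mem_range, hLf]
  · rw [LinearMap.finrank_range_of_inj hLinj]
    rw [Module.finrank_pi_fintype]
    simp [Module.finrank_pi]
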